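/- arXiv:2008.13779 — 2 statements merged into one kernel-verified Lean document; each statement's English description precedes it below -/
import Mathlib

section
/- Let T be a compact, self-adjoint, nonnegative operator on a real Hilbert space with eigenvalues λ_1 ≥ λ_2 ≥ … ≥ 0 and orthonormal eigenvectors ψ_k, where λ_1 has multiplicity m (λ_1 = ⋯ = λ_m > λ_{m+1}). If the initial vector d^(1) (unit norm) satisfies ⟨d^(1), ψ_k⟩ ≠ 0 for some k ∈ {1,…,m}, then the power-iteration gains γ^(i) = ‖T d^(i)‖ converge to λ_1 as i → ∞. -/
open scoped RealInnerProductSpace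
open Filter

set_option maxHeartbeats 1000000

/-- the power-iteration gains converge to the dominant eigenvalue
`λ₁ = lam 0` (of multiplicity `m`) provided the initial vector is not orthogonal
to the dominant eigenspace. Eigenvalues are indexed from `0`, so `lam 0` is λ₁
and `lam k = lam 0` for `k < m`. -/
theorem power_iteration_gain_tendsto
    {H : Type*} [NormedAddCommGroup H] [InnerProductSpace ℝ H] [CompleteSpace H]
    (T : H →L[ℝ] H)
    (hsa : IsSelfAdjoint T)
    (hnn : ∀ x : H, 0 ≤ ⟪T x, x⟫)
    (hcomp : IsCompactOperator T)
    (ψ : ℕ → H) (lam : ℕ → ℝ)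
    (horth : Orthonormal ℝ ψ)
    (hlam_nonneg : ∀ k, 0 ≤ lam k)
    (hlam_sorted : ∀ k, lam (k + 1) ≤ lam k)
    (hspec : ∀ d : H, HasSum (fun k => (lam k * ⟪d, ψ k⟫) • ψ k) (T d))
    (m : ℕ) (hm : 0 < m)
    (hmult : ∀ k < m, lam k = lam 0)
    (hgap : lam m < lam 0)
    (d : ℕ → H) (γ : ℕ → ℝ)
    (hd1 : ‖d 1‖ = 1)
    (hinit : ∃ k < m, ⟪d 1, ψ k⟫ ≠ 0)
    (hγ : ∀ i ≥ 1, γ i = ‖T (d i)‖)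
    (hγne : ∀ i ≥ 1, γ i ≠ 0)
    (hrec : ∀ i ≥ 1, d (i + 1) = (γ i)⁻¹ • T (d i)) :
    Tendsto γ atTop (nhds (lam 0)) := by
  classical
  set a : ℝ := lam 0 with ha_def
  have ha : 0 < a := (hlam_nonneg m).trans_lt hgap
  set c : ℕ → ℝ := fun k => ⟪d 1, ψ k⟫ with hc_def
  -- Step A: inner products of T x with eigenvectors
  have stepA : ∀ (x : H) (j : ℕ), ⟪T x, ψ j⟫ = lam j * ⟪x, ψ j⟫ := by
    intro x j
    have h1 : HasSum (fun k => ⟪ψ j, (lam k * ⟪x, ψ k⟫) • ψ k⟫) ⟪ψ j, T x⟫ :=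
      (hspec x).mapL (innerSL ℝ (ψ j))
    have h2 : (fun k => ⟪ψ j, (lam k * ⟪x, ψ k⟫) • ψ k⟫)
        = fun k => if k = j then lam j * ⟪x, ψ j⟫ else 0 := by
      funext k
      rw [real_inner_smul_right, orthonormal_iff_ite.mp horth j k]
      rcases eq_or_ne k j with rfl | hkj
      · simp
      · simp [hkj, Ne.symm hkj]
    rw [h2] at h1
    have h3 := ((hasSum_ite_eq j (lam j * ⟪x, ψ j⟫)).unique h1).symm
    rw [real_inner_comm]
    exact h3
  -- Step B: norm of T x via the coefficients
  have stepB : ∀ x : H, HasSum (fun k => (lam k * ⟪x, ψ k⟫) ^ 2) (‖T x‖ ^ 2) := by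
    intro x
    have h1 : HasSum (fun k => ⟪T x, (lam k * ⟪x, ψ k⟫) • ψ k⟫) ⟪T x, T x⟫ :=
      (hspec x).mapL (innerSL ℝ (T x))
    have h2 : (fun k => ⟪T x, (lam k * ⟪x, ψ k⟫) • ψ k⟫)
        = fun k => (lam k * ⟪x, ψ k⟫) ^ 2 := by
      funext k
      rw [real_inner_smul_right, stepA x k, sq]
    rw [h2, real_inner_self_eq_norm_sq] at h1
    exact h1
  -- iterates of T applied to d 1
  set u : ℕ → H := fun n => (T ^ n) (d 1) with hu_def
  have hu_succ : ∀ n, u (n + 1) = T (u n) := by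
    intro n
    simp only [hu_def, pow_succ', ContinuousLinearMap.mul_apply]
  have hinner : ∀ n k, ⟪u n, ψ k⟫ = lam k ^ n * c k := by
    intro n
    induction n with
    | zero => intro k; simp [hu_def, hc_def]
    | succ n ih =>
        intro k
        rw [hu_succ, stepA, ih k, pow_succ]
        ring
  have hnorm : ∀ n, HasSum (fun k => (lam k ^ (n + 1) * c k) ^ 2) (‖u (n + 1)‖ ^ 2) := by
    intro n
    have := stepB (u n)
    rw [← hu_succ] at this
    convert this using 2 with k
    rw [hinner n k, pow_succ]
    ring
  -- positivity of gains
  have hγpos : ∀ i ≥ 1, 0 < γ i := by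
    intro i hi
    rcases (hγ i hi ▸ norm_nonneg (T (d i))).lt_or_eq with h | h
    · exact h
    · exact absurd h.symm (hγne i hi)
  -- the product of gains
  set P : ℕ → ℝ := fun n => ∏ j ∈ Finset.Icc 1 n, γ j with hP_def
  have hPpos : ∀ n, 0 < P n := by
    intro n
    exact Finset.prod_pos fun j hj => hγpos j (Finset.mem_Icc.mp hj).1
  have hPsucc : ∀ n, P (n + 1) = P n * γ (n + 1) := by
    intro n
    exact Finset.prod_Icc_succ_top (by omega) γ
  have hdP : ∀ n, d (n + 1) = (P n)⁻¹ • u n := by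
    intro n
    induction n with
    | zero => simp [hP_def, hu_def]
    | succ n ih =>
        rw [hrec (n + 1) (by omega), ih, map_smul, ← hu_succ, hPsucc, smul_smul,
          mul_inv, mul_comm]
  have hPnorm : ∀ n, ‖u n‖ = P n := by
    intro n
    induction n with
    | zero => simpa [hP_def, hu_def] using hd1
    | succ n ih =>
        have h1 : γ (n + 1) = (P n)⁻¹ * ‖u (n + 1)‖ := by
          rw [hγ (n + 1) (by omega), hdP n, map_smul, ← hu_succ, norm_smul,
            Real.norm_eq_abs, abs_inv, abs_of_pos (hPpos n)]
        have h2 : ‖u (n + 1)‖ = P n * γ (n + 1) := by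
          rw [h1, ← mul_assoc, mul_inv_cancel₀ (hPpos n).ne', one_mul]
        rw [h2, hPsucc]
  have hu_pos : ∀ n, 0 < ‖u n‖ := fun n => (hPnorm n) ▸ hPpos n
  have hγ_eq : ∀ n, γ (n + 1) = ‖u (n + 1)‖ / ‖u n‖ := by
    intro n
    rw [hPnorm, hPnorm, hPsucc, mul_comm, mul_div_assoc, div_self (hPpos n).ne', mul_one]
  -- normalized squared norms
  set F : ℕ → ℝ := fun n => (‖u n‖ / a ^ n) ^ 2 with hF_def
  have hFpos : ∀ n, 0 < F n := by
    intro n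
    exact pow_pos (div_pos (hu_pos n) (pow_pos ha n)) 2
  have hFsum : ∀ n, HasSum (fun k => ((lam k / a) ^ (n + 1) * c k) ^ 2) (F (n + 1)) := by
    intro n
    have h1 := (hnorm n).div_const ((a ^ (n + 1)) ^ 2)
    have h2 : (fun k => (lam k ^ (n + 1) * c k) ^ 2 / (a ^ (n + 1)) ^ 2)
        = fun k => ((lam k / a) ^ (n + 1) * c k) ^ 2 := by
      funext k
      rw [div_pow]
      field_simp
    have h3 : ‖u (n + 1)‖ ^ 2 / (a ^ (n + 1)) ^ 2 = F (n + 1) := by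
      simp only [hF_def]
      rw [div_pow]
    rw [h2, h3] at h1
    exact h1
  -- the limit
  set S : ℝ := ∑ k ∈ Finset.range m, c k ^ 2 with hS_def
  have hSpos : 0 < S := by
    obtain ⟨k, hk, hck⟩ := hinit
    exact Finset.sum_pos' (fun i _ => sq_nonneg _)
      ⟨k, Finset.mem_range.2 hk, by positivity⟩
  have hsumm : Summable fun k => c k ^ 2 := by
    have := horth.inner_products_summable (d 1)
    convert this using 2 with k
    rw [Real.norm_eq_abs, sq_abs, real_inner_comm]
  set r : ℝ := lam m / a with hr_def
  have hr0 : 0 ≤ r := div_nonneg (hlam_nonneg m) ha.le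
  have hr1 : r < 1 := (div_lt_one ha).2 hgap
  have hlam_anti : Antitone lam := antitone_nat_of_succ_le hlam_sorted
  set B : ℝ := ∑' j, c (j + m) ^ 2 with hB_def
  set R : ℕ → ℝ := fun n => ∑' j, ((lam (j + m) / a) ^ (n + 1) * c (j + m)) ^ 2
    with hR_def
  have hFsplit : ∀ n, F (n + 1) = S + R n := by
    intro n
    have h1 := Summable.sum_add_tsum_nat_add (f := fun k => ((lam k / a) ^ (n + 1) * c k) ^ 2)
      m (hFsum n).summable
    rw [(hFsum n).tsum_eq] at h1
    have h2 : ∑ k ∈ Finset.range m, ((lam k / a) ^ (n + 1) * c k) ^ 2 = S := by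
      apply Finset.sum_congr rfl
      intro k hk
      rw [hmult k (Finset.mem_range.mp hk), div_self ha.ne', one_pow, one_mul]
    rw [h2] at h1
    exact h1.symm
  have hRbound : ∀ n, R n ≤ (r ^ 2) ^ (n + 1) * B := by
    intro n
    have hsum1 : Summable fun j => ((lam (j + m) / a) ^ (n + 1) * c (j + m)) ^ 2 :=
      (summable_nat_add_iff m).2 (hFsum n).summable
    have hsumB : Summable fun j => c (j + m) ^ 2 := (summable_nat_add_iff m).2 hsumm
    have hle : ∀ j, ((lam (j + m) / a) ^ (n + 1) * c (j + m)) ^ 2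
        ≤ (r ^ 2) ^ (n + 1) * c (j + m) ^ 2 := by
      intro j
      have h1 : 0 ≤ lam (j + m) / a := div_nonneg (hlam_nonneg _) ha.le
      have h2 : lam (j + m) / a ≤ r :=
        (div_le_div_iff_of_pos_right ha).2 (hlam_anti (Nat.le_add_left m j))
      have h3 : (lam (j + m) / a) ^ (n + 1) ≤ r ^ (n + 1) :=
        pow_le_pow_left₀ h1 h2 (n + 1)
      calc ((lam (j + m) / a) ^ (n + 1) * c (j + m)) ^ 2
          = ((lam (j + m) / a) ^ (n + 1)) ^ 2 * c (j + m) ^ 2 := by ring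
        _ ≤ (r ^ (n + 1)) ^ 2 * c (j + m) ^ 2 := by
            apply mul_le_mul_of_nonneg_right _ (sq_nonneg _)
            exact pow_le_pow_left₀ (pow_nonneg h1 _) h3 2
        _ = (r ^ 2) ^ (n + 1) * c (j + m) ^ 2 := by ring
    calc R n ≤ ∑' j, (r ^ 2) ^ (n + 1) * c (j + m) ^ 2 :=
          Summable.tsum_le_tsum hle hsum1 (hsumB.mul_left _)
      _ = (r ^ 2) ^ (n + 1) * B := tsum_mul_left
  have hRnonneg : ∀ n, 0 ≤ R n := by
    intro n
    exact tsum_nonneg fun j => sq_nonneg _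
  have hR0 : Tendsto R atTop (nhds 0) := by
    apply squeeze_zero hRnonneg hRbound
    have hr2 : r ^ 2 < 1 := pow_lt_one₀ hr0 hr1 two_ne_zero
    have h1 : Tendsto (fun n : ℕ => (r ^ 2) ^ n) atTop (nhds 0) :=
      tendsto_pow_atTop_nhds_zero_of_lt_one (sq_nonneg r) hr2
    have h2 : Tendsto (fun n : ℕ => (r ^ 2) ^ (n + 1)) atTop (nhds 0) :=
      h1.comp (tendsto_add_atTop_nat 1)
    simpa using h2.mul_const B
  have hF : Tendsto (fun n => F (n + 1)) atTop (nhds S) := by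
    have h1 : Tendsto (fun n => S + R n) atTop (nhds (S + 0)) :=
      tendsto_const_nhds.add hR0
    rw [add_zero] at h1
    exact h1.congr fun n => (hFsplit n).symm
  -- identify γ in terms of F
  have hsqrtF : ∀ n, Real.sqrt (F n) = ‖u n‖ / a ^ n := by
    intro n
    rw [hF_def]
    exact Real.sqrt_sq (div_nonneg (norm_nonneg _) (pow_pos ha n).le)
  have hγF : ∀ n, γ (n + 2) = a * (Real.sqrt (F (n + 2)) / Real.sqrt (F (n + 1))) := by
    intro n
    have h1 : ‖u (n + 1)‖ ≠ 0 := (hu_pos _).ne'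
    have h2 : (a : ℝ) ≠ 0 := ha.ne'
    rw [hγ_eq (n + 1), hsqrtF, hsqrtF]
    have h3 : (a : ℝ) ^ (n + 1) ≠ 0 := pow_ne_zero _ h2
    field_simp
    ring
  have hsqrtS : (0 : ℝ) < Real.sqrt S := Real.sqrt_pos.2 hSpos
  have hγlim : Tendsto (fun n => γ (n + 2)) atTop (nhds a) := by
    have h1 : Tendsto (fun n => Real.sqrt (F (n + 2))) atTop (nhds (Real.sqrt S)) :=
      (hF.comp (tendsto_add_atTop_nat 1)).sqrt
    have h2 : Tendsto (fun n => Real.sqrt (F (n + 1))) atTop (nhds (Real.sqrt S)) :=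
      hF.sqrt
    have h3 := (h1.div h2 hsqrtS.ne').const_mul a
    rw [div_self hsqrtS.ne', mul_one] at h3
    exact h3.congr fun n => (hγF n).symm
  exact (tendsto_add_atTop_iff_nat 2).1 hγlim
end

section
/- Under the same hypotheses (compact self-adjoint nonnegative T with dominant eigenvalue λ_1 of multiplicity m, and ⟨d^(1), ψ_k⟩ ≠ 0 for some k ≤ m), the distance from the power iterates d^(i) to the span of {ψ_1,…,ψ_m} converges to 0 as i → ∞. -/
open scoped RealInnerProductSpace
open Filter

lemma aux_coeff {H : Type*} [NormedAddCommGroup H] [InnerProductSpace ℝ H] {ψ : ℕ → H} (horth : Orthonormal ℝ ψ) {b : ℕ → ℝ} {x : H}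
    (h : HasSum (fun k => b k • ψ k) x) (j : ℕ) : ⟪x, ψ j⟫ = b j := by
  have h2 : HasSum (fun k => ⟪ψ j, b k • ψ k⟫) ⟪ψ j, x⟫ := h.mapL (innerSL ℝ (ψ j))
  have h3 : (fun k => ⟪ψ j, b k • ψ k⟫) = fun k => if k = j then b j else 0 := by
    funext k
    rw [real_inner_smul_right, orthonormal_iff_ite.mp horth j k]
    by_cases hk : k = j
    · subst hk; simp
    · simp [hk, Ne.symm hk]
  rw [h3] at h2
  rw [real_inner_comm]
  exact h2.unique (hasSum_ite_eq j (b j))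

lemma aux_normsq {H : Type*} [NormedAddCommGroup H] [InnerProductSpace ℝ H] {ψ : ℕ → H} (horth : Orthonormal ℝ ψ) {b : ℕ → ℝ} {x : H}
    (h : HasSum (fun k => b k • ψ k) x) : HasSum (fun k => b k ^ 2) (‖x‖ ^ 2) := by
  have h2 : HasSum (fun k => ⟪x, b k • ψ k⟫) ⟪x, x⟫ := h.mapL (innerSL ℝ x)
  have h3 : (fun k => ⟪x, b k • ψ k⟫) = fun k => b k ^ 2 := by
    funext k
    rw [real_inner_smul_right, aux_coeff horth h k]
    ring
  rw [h3, real_inner_self_eq_norm_sq] at h2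
  exact h2


/-- the distance from the power iterates to the span of the
dominant eigenvectors converges to `0`. The dominant eigenvalue
`λ₁ = lam 0` (of multiplicity `m`) provided the initial vector is not orthogonal
to the dominant eigenspace. Eigenvalues are indexed from `0`, so `lam 0` is λ₁
and `lam k = lam 0` for `k < m`. -/
theorem power_iteration_iterates_tendsto_span
    {H : Type*} [NormedAddCommGroup H] [InnerProductSpace ℝ H] [CompleteSpace H]
    (T : H →L[ℝ] H)
    (hsa : IsSelfAdjoint T)
    (hnn : ∀ x : H, 0 ≤ ⟪T x, x⟫)
    (hcomp : IsCompactOperator T)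
    (ψ : ℕ → H) (lam : ℕ → ℝ)
    (horth : Orthonormal ℝ ψ)
    (hlam_nonneg : ∀ k, 0 ≤ lam k)
    (hlam_sorted : ∀ k, lam (k + 1) ≤ lam k)
    (hspec : ∀ d : H, HasSum (fun k => (lam k * ⟪d, ψ k⟫) • ψ k) (T d))
    (m : ℕ) (hm : 0 < m)
    (hmult : ∀ k < m, lam k = lam 0)
    (hgap : lam m < lam 0)
    (d : ℕ → H) (γ : ℕ → ℝ)
    (hd1 : ‖d 1‖ = 1)
    (hinit : ∃ k < m, ⟪d 1, ψ k⟫ ≠ 0)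
    (hγ : ∀ i ≥ 1, γ i = ‖T (d i)‖)
    (hγne : ∀ i ≥ 1, γ i ≠ 0)
    (hrec : ∀ i ≥ 1, d (i + 1) = (γ i)⁻¹ • T (d i)) :
    Tendsto (fun i => Metric.infDist (d i)
      (Submodule.span ℝ (ψ '' {k : ℕ | k < m}) : Set H)) atTop (nhds 0) := by
  obtain ⟨k0, hk0m, ha⟩ := hinit
  have hLpos : 0 < lam 0 := lt_of_le_of_lt (hlam_nonneg m) hgap
  have hanti : Antitone lam := antitone_nat_of_succ_le hlam_sorted
  -- positivity of γ
  have hγpos : ∀ i ≥ 1, 0 < γ i := by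
    intro i hi
    rw [hγ i hi]
    exact lt_of_le_of_ne (norm_nonneg _) (fun h => hγne i hi ((hγ i hi).trans h.symm))
  -- unit norms
  have h1 : ∀ i, 1 ≤ i → ‖d i‖ = 1 := by
    intro i hi
    induction i, hi using Nat.le_induction with
    | base => exact hd1
    | succ i hi ih =>
      rw [hrec i hi, norm_smul, ← hγ i hi, norm_inv, Real.norm_eq_abs,
        abs_of_pos (hγpos i hi), inv_mul_cancel₀ (hγne i hi)]
  -- coefficient recursion
  have hcoeff : ∀ i ≥ 1, ∀ k, ⟪d (i+1), ψ k⟫ = (γ i)⁻¹ * (lam k * ⟪d i, ψ k⟫) := by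
    intro i hi k
    rw [hrec i hi, real_inner_smul_left, aux_coeff horth (hspec (d i)) k]
  -- scaled HasSum for d (i+1)
  have hscaled : ∀ i ≥ 1, HasSum (fun k => ⟪d (i+1), ψ k⟫ • ψ k) (d (i+1)) := by
    intro i hi
    have h := (hspec (d i)).const_smul ((γ i)⁻¹)
    rw [← hrec i hi] at h
    refine h.congr_fun ?_
    intro k
    rw [smul_smul, hcoeff i hi k]
  -- Parseval for d (i+1)
  have hPars : ∀ i ≥ 1, HasSum (fun k => ⟪d (i+1), ψ k⟫ ^ 2) 1 := by
    intro i hi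
    have := aux_normsq horth (hscaled i hi)
    rwa [h1 (i+1) (by omega), one_pow] at this
  -- the squared norm of T (d i)
  have hTnorm : ∀ i ≥ 1, HasSum (fun k => (lam k * ⟪d i, ψ k⟫) ^ 2) (γ i ^ 2) := by
    intro i hi
    rw [hγ i hi]
    exact aux_normsq horth (hspec (d i))
  -- Bessel
  have hbsum : ∀ i ≥ 1, Summable (fun k => ⟪d i, ψ k⟫ ^ 2) := by
    intro i _
    have := horth.inner_products_summable (d i)
    refine this.congr fun k => ?_
    rw [Real.norm_eq_abs, sq_abs, real_inner_comm]
  have hbess : ∀ i ≥ 1, ∑' k, ⟪d i, ψ k⟫ ^ 2 ≤ 1 := by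
    intro i hi
    have := horth.tsum_inner_products_le (d i)
    rw [h1 i hi, one_pow] at this
    calc ∑' k, ⟪d i, ψ k⟫ ^ 2 = ∑' k, ‖⟪ψ k, d i⟫‖ ^ 2 := by
          refine tsum_congr fun k => ?_
          rw [Real.norm_eq_abs, sq_abs, real_inner_comm]
      _ ≤ 1 := this
  -- γ i ≤ lam 0
  have hγle : ∀ i ≥ 1, γ i ≤ lam 0 := by
    intro i hi
    have hsq : γ i ^ 2 ≤ lam 0 ^ 2 := by
      have e1 : γ i ^ 2 = ∑' k, (lam k * ⟪d i, ψ k⟫) ^ 2 := (hTnorm i hi).tsum_eq.symm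
      have e2 : ∑' k, (lam k * ⟪d i, ψ k⟫) ^ 2 ≤ ∑' k, lam 0 ^ 2 * ⟪d i, ψ k⟫ ^ 2 := by
        refine Summable.tsum_le_tsum (fun k => ?_) (hTnorm i hi).summable ((hbsum i hi).mul_left _)
        have hk2 : lam k ^ 2 ≤ lam 0 ^ 2 :=
          pow_le_pow_left₀ (hlam_nonneg k) (hanti (Nat.zero_le k)) 2
        rw [mul_pow]
        exact mul_le_mul_of_nonneg_right hk2 (sq_nonneg _)
      have e3 : ∑' k, lam 0 ^ 2 * ⟪d i, ψ k⟫ ^ 2 ≤ lam 0 ^ 2 := by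
        rw [tsum_mul_left]
        calc lam 0 ^ 2 * ∑' k, ⟪d i, ψ k⟫ ^ 2 ≤ lam 0 ^ 2 * 1 :=
              mul_le_mul_of_nonneg_left (hbess i hi) (sq_nonneg _)
          _ = lam 0 ^ 2 := mul_one _
      linarith
    nlinarith [hγpos i hi, hLpos]
  -- lower bound on the dominant coefficient
  have hlow : ∀ i, 1 ≤ i → ⟪d 1, ψ k0⟫ ^ 2 ≤ ⟪d i, ψ k0⟫ ^ 2 := by
    intro i hi
    induction i, hi using Nat.le_induction with
    | base => exact le_refl _
    | succ i hi ih =>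
      have ht : 1 ≤ (γ i)⁻¹ * lam 0 := by
        rw [← div_eq_inv_mul]
        exact (one_le_div (hγpos i hi)).mpr (hγle i hi)
      have : ⟪d (i+1), ψ k0⟫ ^ 2 = ((γ i)⁻¹ * lam 0) ^ 2 * ⟪d i, ψ k0⟫ ^ 2 := by
        rw [hcoeff i hi k0, hmult k0 hk0m]; ring
      rw [this]
      have ht2 : (1:ℝ) ≤ ((γ i)⁻¹ * lam 0) ^ 2 := by nlinarith [ht]
      nlinarith [sq_nonneg (⟪d i, ψ k0⟫ : ℝ), ht2, ih]
  -- the tail sums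
  set s : ℕ → ℝ := fun i => ∑ k ∈ Finset.range m, ⟪d i, ψ k⟫ ^ 2 with hs
  set g : ℕ → ℕ → ℝ := fun i k => if k < m then 0 else ⟪d i, ψ k⟫ ^ 2 with hgdef
  have hg : ∀ i ≥ 1, HasSum (g (i+1)) (1 - s (i+1)) := by
    intro i hi
    have h2 : HasSum (fun k => if k < m then ⟪d (i+1), ψ k⟫ ^ 2 else 0) (s (i+1)) := by
      have h2a : HasSum (fun k => if k < m then ⟪d (i+1), ψ k⟫ ^ 2 else 0)
          (∑ k ∈ Finset.range m, if k < m then ⟪d (i+1), ψ k⟫ ^ 2 else 0) := by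
        refine hasSum_sum_of_ne_finset_zero fun k hk => ?_
        rw [if_neg (by simpa using hk)]
      have h2b : (∑ k ∈ Finset.range m, if k < m then ⟪d (i+1), ψ k⟫ ^ 2 else 0) = s (i+1) := by
        refine Finset.sum_congr rfl fun k hk => ?_
        rw [if_pos (Finset.mem_range.mp hk)]
      rwa [h2b] at h2a
    have h3 := (hPars i hi).sub h2
    refine h3.congr_fun fun k => ?_
    by_cases hk : k < m <;> simp [hgdef, hk]
  have hqnonneg : ∀ i ≥ 1, 0 ≤ 1 - s (i+1) := by
    intro i hi
    refine hasSum_le (fun k => ?_) hasSum_zero (hg i hi)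
    by_cases hk : k < m <;> simp [hgdef, hk, sq_nonneg]
  -- geometric decay of the tail relative to the dominant coefficient
  have hqrec : ∀ i ≥ 1, 1 - s (i+1+1) ≤ ((γ (i+1))⁻¹ * lam m) ^ 2 * (1 - s (i+1)) := by
    intro i hi
    have hi1 : 1 ≤ i + 1 := by omega
    have hA := hg (i+1) hi1
    have hB := (hg i hi).mul_left (((γ (i+1))⁻¹ * lam m) ^ 2)
    refine hasSum_le (fun k => ?_) hA hB
    by_cases hk : k < m
    · simp [hgdef, hk]
    · push_neg at hk
      simp only [hgdef, if_neg (not_lt.mpr hk)]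
      rw [hcoeff (i+1) hi1 k]
      have h4 : lam k ^ 2 ≤ lam m ^ 2 := pow_le_pow_left₀ (hlam_nonneg k) (hanti hk) 2
      nlinarith [sq_nonneg ((γ (i+1))⁻¹ * ⟪d (i+1), ψ k⟫ : ℝ), h4]
  have hck : ∀ i ≥ 1, ⟪d (i+1+1), ψ k0⟫ ^ 2 = ((γ (i+1))⁻¹ * lam 0) ^ 2 * ⟪d (i+1), ψ k0⟫ ^ 2 := by
    intro i hi
    rw [hcoeff (i+1) (by omega) k0, hmult k0 hk0m]
    ring
  have hapos : 0 < ⟪d 1, ψ k0⟫ ^ 2 := by positivity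
  have hxpos : ∀ i ≥ 1, 0 < ⟪d i, ψ k0⟫ ^ 2 := fun i hi => lt_of_lt_of_le hapos (hlow i hi)
  set F : ℕ → ℝ := fun i => (1 - s i) / ⟪d i, ψ k0⟫ ^ 2 with hF
  set r : ℝ := (lam m / lam 0) ^ 2 with hr
  have hr0 : 0 ≤ r := sq_nonneg _
  have hr1 : r < 1 := by
    rw [hr]
    have : lam m / lam 0 < 1 := (div_lt_one hLpos).mpr hgap
    nlinarith [div_nonneg (hlam_nonneg m) hLpos.le, this]
  have hFrec : ∀ i ≥ 1, F (i+1+1) ≤ r * F (i+1) := by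
    intro i hi
    have hγp := hγpos (i+1) (by omega)
    have hxp := hxpos (i+1) (by omega)
    rw [hF]
    simp only []
    rw [hck i hi]
    have hD : 0 < ((γ (i+1))⁻¹ * lam 0) ^ 2 * ⟪d (i+1), ψ k0⟫ ^ 2 := by positivity
    calc (1 - s (i+1+1)) / (((γ (i+1))⁻¹ * lam 0) ^ 2 * ⟪d (i+1), ψ k0⟫ ^ 2)
        ≤ (((γ (i+1))⁻¹ * lam m) ^ 2 * (1 - s (i+1))) /
            (((γ (i+1))⁻¹ * lam 0) ^ 2 * ⟪d (i+1), ψ k0⟫ ^ 2) := by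
          exact div_le_div_of_nonneg_right (hqrec i hi) hD.le
      _ = r * ((1 - s (i+1)) / ⟪d (i+1), ψ k0⟫ ^ 2) := by
          rw [hr]
          field_simp
  have hFgeo : ∀ j : ℕ, F (j+2) ≤ r ^ j * F 2 := by
    intro j
    induction j with
    | zero => simp
    | succ j ih =>
      have h5 : F (j+1+2) ≤ r * F (j+2) := hFrec (j+1) (by omega)
      calc F (j+1+2) ≤ r * F (j+2) := h5
        _ ≤ r * (r ^ j * F 2) := mul_le_mul_of_nonneg_left ih hr0
        _ = r ^ (j+1) * F 2 := by ring
  -- the tail bounds F from below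
  have hxle1 : ∀ i ≥ 1, ⟪d i, ψ k0⟫ ^ 2 ≤ 1 := by
    intro i hi
    have hcs := abs_real_inner_le_norm (d i) (ψ k0)
    rw [h1 i hi, horth.1 k0, one_mul] at hcs
    calc ⟪d i, ψ k0⟫ ^ 2 = |⟪d i, ψ k0⟫| ^ 2 := (sq_abs _).symm
      _ ≤ 1 ^ 2 := pow_le_pow_left₀ (abs_nonneg _) hcs 2
      _ = 1 := one_pow 2
  have hqF : ∀ i ≥ 1, 1 - s (i+1) ≤ F (i+1) := by
    intro i hi
    have hxp := hxpos (i+1) (by omega)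
    rw [hF]
    rw [le_div_iff₀ hxp]
    exact mul_le_of_le_one_right (hqnonneg i hi) (hxle1 (i+1) (by omega))
  -- distance bound
  have hdist : ∀ i ≥ 1, Metric.infDist (d i)
      (Submodule.span ℝ (ψ '' {k : ℕ | k < m}) : Set H) ≤ Real.sqrt (1 - s i) := by
    intro i hi
    set w : H := ∑ k ∈ Finset.range m, ⟪d i, ψ k⟫ • ψ k with hw
    have hwmem : w ∈ (Submodule.span ℝ (ψ '' {k : ℕ | k < m}) : Set H) := by
      refine Submodule.sum_mem _ fun k hk => Submodule.smul_mem _ _ (Submodule.subset_span ?_)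
      exact ⟨k, Finset.mem_range.mp hk, rfl⟩
    have hinner : ⟪d i, w⟫ = s i := by
      rw [hw, inner_sum]
      refine Finset.sum_congr rfl fun k _ => ?_
      rw [real_inner_smul_right]
      ring
    have hwnorm : ‖w‖ ^ 2 = s i := by
      rw [← real_inner_self_eq_norm_sq, hw, horth.inner_sum]
      refine Finset.sum_congr rfl fun k _ => ?_
      simp
      ring
    have hsub : ‖d i - w‖ ^ 2 = 1 - s i := by
      rw [norm_sub_sq_real, hinner, hwnorm, h1 i hi]
      ring
    calc Metric.infDist (d i) (Submodule.span ℝ (ψ '' {k : ℕ | k < m}) : Set H)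
        ≤ dist (d i) w := Metric.infDist_le_dist_of_mem hwmem
      _ = ‖d i - w‖ := dist_eq_norm _ _
      _ = Real.sqrt (‖d i - w‖ ^ 2) := (Real.sqrt_sq (norm_nonneg _)).symm
      _ = Real.sqrt (1 - s i) := by rw [hsub]
  -- conclusion
  have key : Tendsto (fun j : ℕ => Metric.infDist (d (j+2))
      (Submodule.span ℝ (ψ '' {k : ℕ | k < m}) : Set H)) atTop (nhds 0) := by
    have hbound : ∀ j : ℕ, Metric.infDist (d (j+2))
        (Submodule.span ℝ (ψ '' {k : ℕ | k < m}) : Set H) ≤ Real.sqrt (r ^ j * F 2) := by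
      intro j
      have e1 := hdist (j+2) (by omega)
      have e2 : (1:ℝ) - s (j+2) ≤ F (j+2) := hqF (j+1) (by omega)
      have e3 := hFgeo j
      calc Metric.infDist (d (j+2)) (Submodule.span ℝ (ψ '' {k : ℕ | k < m}) : Set H)
          ≤ Real.sqrt (1 - s (j+2)) := e1
        _ ≤ Real.sqrt (r ^ j * F 2) := Real.sqrt_le_sqrt (by linarith)
    have hlim : Tendsto (fun j : ℕ => Real.sqrt (r ^ j * F 2)) atTop (nhds 0) := by
      have h6 : Tendsto (fun j : ℕ => r ^ j * F 2) atTop (nhds 0) := by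
        have := (tendsto_pow_atTop_nhds_zero_of_lt_one hr0 hr1).mul_const (F 2)
        rwa [zero_mul] at this
      have h7 := h6.sqrt
      rwa [Real.sqrt_zero] at h7
    exact squeeze_zero (fun j => Metric.infDist_nonneg) hbound hlim
  exact (tendsto_add_atTop_iff_nat 2).mp key
end
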